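/- (Universal Chord Theorem) For every continuous f : [0,1] → ℝ with f(0) = f(1) = 0 and every positive integer n, the length 1/n belongs to the horizontal chord set S(f). -/

import Mathlib

def chordSet (f : ℝ → ℝ) : Set ℝ :=
  {ℓ | ℓ ∈ Set.Icc (0:ℝ) 1 ∧ ∃ s ∈ Set.Icc (0:ℝ) 1, s + ℓ ∈ Set.Icc (0:ℝ) 1 ∧ f s = f (s + ℓ)}

theorem stmt4 (f : ℝ → ℝ) (hf : ContinuousOn f (Set.Icc 0 1))
    (h0 : f 0 = 0) (h1 : f 1 = 0) (n : ℕ) (hn : 1 ≤ n) :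
    (1 : ℝ) / n ∈ chordSet f := by
  have hnpos : (0:ℝ) < n := by positivity
  set c : ℝ := 1 / n with hc
  have hc0 : 0 < c := by positivity
  have hnc : (n:ℝ) * c = 1 := by
    rw [hc]; field_simp
  have hc1 : c ≤ 1 := by
    rw [hc]
    rw [div_le_one hnpos]
    exact_mod_cast hn
  -- g
  set g : ℝ → ℝ := fun x => f (x + c) - f x with hg
  have hmem : ∀ k : ℕ, k < n → (k:ℝ) * c ∈ Set.Icc (0:ℝ) (1 - c) := by
    intro k hk
    constructor
    · positivity
    · have : (k:ℝ) ≤ n - 1 := by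
        have : (k:ℝ) + 1 ≤ n := by exact_mod_cast hk
        linarith
      have := mul_le_mul_of_nonneg_right this hc0.le
      have hnc' : ((n:ℝ) - 1) * c = 1 - c := by
        rw [sub_mul, hnc, one_mul]
      linarith [hnc' ▸ this]
  have hsub : Set.Icc (0:ℝ) (1 - c) ⊆ Set.Icc 0 1 := Set.Icc_subset_Icc le_rfl (by linarith)
  have hgcont : ContinuousOn g (Set.Icc 0 (1 - c)) := by
    apply ContinuousOn.sub
    · apply hf.comp (continuousOn_id.add continuousOn_const)
      intro x hx
      constructor
      · simp; linarith [hx.1, hc0.le, show c = (n:ℝ)⁻¹ from by rw [hc, one_div]]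
      · simp; linarith [hx.2, show c = (n:ℝ)⁻¹ from by rw [hc, one_div]]
    · exact hf.mono hsub
  -- telescoping sum
  have hsum : ∑ k ∈ Finset.range n, g ((k:ℝ) * c) = 0 := by
    have : ∀ k : ℕ, g ((k:ℝ) * c) = f (((k+1:ℕ):ℝ) * c) - f ((k:ℝ) * c) := by
      intro k
      push_cast
      simp [hg, add_mul]
    rw [Finset.sum_congr rfl (fun k _ => this k)]
    rw [Finset.sum_range_sub (fun k => f ((k:ℝ) * c))]
    simp [hnc, h0, h1]
  have hne : (Finset.range n).Nonempty := ⟨0, Finset.mem_range.mpr hn⟩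
  obtain ⟨i, hi, hgi⟩ : ∃ i ∈ Finset.range n, g ((i:ℝ) * c) ≤ 0 := by
    by_contra h
    push_neg at h
    have : 0 < ∑ k ∈ Finset.range n, g ((k:ℝ) * c) :=
      Finset.sum_pos (fun k hk => h k hk) hne
    linarith
  obtain ⟨j, hj, hgj⟩ : ∃ j ∈ Finset.range n, 0 ≤ g ((j:ℝ) * c) := by
    by_contra h
    push_neg at h
    have : ∑ k ∈ Finset.range n, g ((k:ℝ) * c) < 0 :=
      Finset.sum_neg (fun k hk => h k hk) hne
    linarith
  set a : ℝ := (i:ℝ) * c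
  set b : ℝ := (j:ℝ) * c
  have ha : a ∈ Set.Icc (0:ℝ) (1 - c) := hmem i (Finset.mem_range.mp hi)
  have hb : b ∈ Set.Icc (0:ℝ) (1 - c) := hmem j (Finset.mem_range.mp hj)
  have huIcc : Set.uIcc a b ⊆ Set.Icc (0:ℝ) (1 - c) := Set.uIcc_subset_Icc ha hb
  have hivt := intermediate_value_uIcc (hgcont.mono huIcc)
  have h0mem : (0:ℝ) ∈ Set.uIcc (g a) (g b) := by
    rw [Set.mem_uIcc]
    left; exact ⟨hgi, hgj⟩
  obtain ⟨s, hs, hgs⟩ := hivt h0mem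
  have hs' : s ∈ Set.Icc (0:ℝ) (1 - c) := huIcc hs
  refine ⟨⟨hc0.le, hc1⟩, s, hsub hs', ⟨by linarith [hs'.1, hc0.le], by linarith [hs'.2]⟩, ?_⟩
  have : f (s + c) - f s = 0 := hgs
  linarith
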